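/- For n > 2 and x ∈ [0,1): ∫₀ˣ (1-t)^{n-2} ₂F₁(n, n/2; 1+n/2; t) dt = [(n-2)/(2(n-1))] · x · ₃F₂(2-n/2, 1, 1; 2, 1+n/2; x) + [n/(2(n-1))] · log(1/(1-x)). -/

import Mathlib

open MeasureTheory Real intervalIntegral

/-- Pochhammer symbol (rising factorial) `(x)_k = x(x+1)⋯(x+k-1)`. -/
noncomputable def poch (x : ℝ) (k : ℕ) : ℝ := ∏ i ∈ Finset.range k, (x + i)

/-- Gauss hypergeometric function `₂F₁(a,b;c;t)` as a series. -/
noncomputable def hyp2F1 (a b c t : ℝ) : ℝ :=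
  ∑' k : ℕ, poch a k * poch b k / (poch c k * (Nat.factorial k)) * t ^ k

/-- Generalized hypergeometric function `₃F₂(a₁,a₂,a₃;c₁,c₂;x)` as a series. -/
noncomputable def hyp3F2 (a₁ a₂ a₃ c₁ c₂ x : ℝ) : ℝ :=
  ∑' k : ℕ, poch a₁ k * poch a₂ k * poch a₃ k /
    (poch c₁ k * poch c₂ k * (Nat.factorial k)) * x ^ k

open Filter Set Topology

lemma poch_zero (x : ℝ) : poch x 0 = 1 := by simp [poch]

lemma poch_succ (x : ℝ) (k : ℕ) : poch x (k+1) = poch x k * (x + k) :=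
  Finset.prod_range_succ _ _

lemma poch_succ' (x : ℝ) (k : ℕ) : poch x (k+1) = x * poch (x+1) k := by
  rw [poch, Finset.prod_range_succ', poch]
  have h : ∀ i ∈ Finset.range k, (x + ((i:ℕ)+1 : ℕ)) = (x + 1) + (i:ℝ) := by
    intro i _; push_cast; ring
  rw [Finset.prod_congr rfl h]
  push_cast; ring

lemma poch_pos {x : ℝ} (hx : 0 < x) (k : ℕ) : 0 < poch x k := by
  apply Finset.prod_pos
  intro i _
  positivity

lemma poch_one (k : ℕ) : poch 1 k = k.factorial := by
  induction k with
  | zero => simp [poch]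
  | succ k ih => rw [poch_succ, ih]; push_cast [Nat.factorial_succ]; ring

lemma poch_two (k : ℕ) : poch 2 k = ((k:ℝ)+1) * (k.factorial : ℝ) := by
  induction k with
  | zero => simp [poch]
  | succ k ih => rw [poch_succ, ih]; push_cast [Nat.factorial_succ]; ring

lemma abs_poch_le {x y : ℝ} (h : ∀ i : ℕ, |x + i| ≤ y + i) (k : ℕ) :
    |poch x k| ≤ poch y k := by
  induction k with
  | zero => simp [poch]
  | succ k ih =>
      rw [poch_succ, poch_succ, abs_mul]
      have h0 : (0:ℝ) ≤ y + k := le_trans (abs_nonneg _) (h k)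
      have h1 : (0:ℝ) ≤ poch y k := le_trans (abs_nonneg _) ih
      exact mul_le_mul ih (h k) (abs_nonneg _) h1

lemma tendsto_ratio (A B : ℝ) :
    Tendsto (fun k : ℕ => ((k:ℝ) + A) / ((k:ℝ) + B)) atTop (𝓝 1) := by
  have h0 : Tendsto (fun k : ℕ => (A - B) / ((k:ℝ) + B)) atTop (𝓝 0) :=
    Tendsto.div_atTop tendsto_const_nhds
      (tendsto_natCast_atTop_atTop.atTop_add tendsto_const_nhds)
  have h1 : Tendsto (fun k : ℕ => 1 + (A - B) / ((k:ℝ) + B)) atTop (𝓝 1) := by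
    simpa using tendsto_const_nhds.add h0
  apply h1.congr'
  filter_upwards [eventually_gt_atTop ⌈|B|⌉₊] with k hk
  have hkB : (0:ℝ) < (k:ℝ) + B := by
    have : |B| < (k:ℝ) := by
      calc |B| ≤ ⌈|B|⌉₊ := Nat.le_ceil _
      _ < (k:ℝ) := by exact_mod_cast hk
    have := neg_abs_le B
    linarith
  field_simp
  ring

section PS
variable {q ρ : ℕ → ℝ}

lemma summable_abs_ps (hrec : ∀ k, |q (k+1)| ≤ |ρ k| * |q k|)
    (hρ : Tendsto ρ atTop (𝓝 1)) {t : ℝ} (ht : |t| < 1) :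
    Summable fun k => |q k * t ^ k| := by
  have hr1 : (1 + |t|)/2 < 1 := by linarith
  apply summable_of_ratio_norm_eventually_le hr1
  have habs1 : Tendsto (fun k => |ρ k|) atTop (𝓝 1) := by simpa using hρ.abs
  have hmul : Tendsto (fun k => |ρ k| * |t|) atTop (𝓝 (1 * |t|)) :=
    habs1.mul_const _
  have hev : ∀ᶠ k in atTop, |ρ k| * |t| < (1 + |t|)/2 :=
    hmul.eventually_lt_const (by rw [one_mul]; linarith)
  filter_upwards [hev] with k hk
  have h1 : |q (k+1) * t^(k+1)| ≤ (|ρ k| * |t|) * |q k * t^k| := by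
    rw [abs_mul, abs_mul, abs_pow, abs_pow, pow_succ]
    calc |q (k+1)| * (|t|^k * |t|) ≤ (|ρ k| * |q k|) * (|t|^k * |t|) := by
          apply mul_le_mul_of_nonneg_right (hrec k); positivity
      _ = (|ρ k| * |t|) * (|q k| * |t|^k) := by ring
  rw [Real.norm_eq_abs, Real.norm_eq_abs, abs_abs, abs_abs]
  exact h1.trans (mul_le_mul_of_nonneg_right hk.le (abs_nonneg _))

lemma summable_abs_ps' (hrec : ∀ k, q (k+1) = ρ k * q k)
    (hρ : Tendsto ρ atTop (𝓝 1)) {t : ℝ} (ht : |t| < 1) :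
    Summable fun k => |q k * t ^ k| :=
  summable_abs_ps (fun k => by rw [hrec k, abs_mul]) hρ ht

lemma summable_ps (hrec : ∀ k, q (k+1) = ρ k * q k)
    (hρ : Tendsto ρ atTop (𝓝 1)) {t : ℝ} (ht : |t| < 1) :
    Summable fun k => q k * t ^ k :=
  (summable_abs_ps' hrec hρ ht).of_abs

lemma hasDerivAt_ps (hrec : ∀ k, q (k+1) = ρ k * q k)
    (hρ : Tendsto ρ atTop (𝓝 1)) {t : ℝ} (ht : |t| < 1) :
    HasDerivAt (fun y => ∑' k, q k * y ^ k)
      (∑' k : ℕ, ((k:ℝ)+1) * q (k+1) * t ^ k) t := by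
  set r : ℝ := (1 + |t|)/2 with hrdef
  have htr : |t| < r := by rw [hrdef]; linarith
  have hr0 : 0 < r := lt_of_le_of_lt (abs_nonneg t) htr
  have hr1 : r < 1 := by rw [hrdef]; linarith
  set u : ℕ → ℝ := fun k => |q k| * ((k:ℝ) * r^(k-1)) with hudef
  have hu : Summable u := by
    apply summable_of_ratio_norm_eventually_le (r := (1+r)/2) (by linarith)
    have h2 : Tendsto (fun k : ℕ => |ρ k| * (((k:ℝ)+1)/(k:ℝ)) * r) atTop (𝓝 r) := by
      have ha : Tendsto (fun k : ℕ => ((k:ℝ)+1)/((k:ℝ))) atTop (𝓝 1) :=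
        (tendsto_ratio 1 0).congr (by intro k; norm_num)
      have habs1 : Tendsto (fun k => |ρ k|) atTop (𝓝 1) := by simpa using hρ.abs
      have := (habs1.mul ha).mul_const r
      simpa using this
    have hev : ∀ᶠ k in atTop, |ρ k| * (((k:ℝ)+1)/(k:ℝ)) * r < (1+r)/2 :=
      h2.eventually_lt_const (by linarith)
    filter_upwards [hev, eventually_ge_atTop 1] with k hk hk1
    have hkpos : (0:ℝ) < (k:ℝ) := by exact_mod_cast hk1
    have hkey : |ρ k| * ((k:ℝ)+1) * r ≤ (1+r)/2 * k := by
      have h3 := mul_le_mul_of_nonneg_right hk.le hkpos.le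
      have h4 : |ρ k| * (((k:ℝ)+1)/(k:ℝ)) * r * k = |ρ k| * ((k:ℝ)+1) * r := by
        field_simp
      rw [h4] at h3
      exact h3
    rw [Real.norm_eq_abs, Real.norm_eq_abs, hudef]
    simp only []
    have habs : |(|q (k+1)| * (((k+1:ℕ):ℝ) * r^((k+1)-1)))| = |q (k+1)| * (((k:ℝ)+1) * r^k) := by
      rw [abs_of_nonneg (by positivity)]; push_cast; norm_num
    rw [habs, abs_of_nonneg (by positivity : (0:ℝ) ≤ |q k| * ((k:ℝ) * r^(k-1)))]
    have hq1 : |q (k+1)| = |ρ k| * |q k| := by rw [hrec k, abs_mul]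
    have hrk : r^k = r^(k-1) * r := by
      conv_lhs => rw [← Nat.sub_add_cancel hk1]
      rw [pow_succ]
    rw [hq1, hrk]
    calc |ρ k| * |q k| * (((k:ℝ)+1) * (r^(k-1) * r))
        = (|ρ k| * ((k:ℝ)+1) * r) * (|q k| * r^(k-1)) := by ring
      _ ≤ ((1+r)/2 * k) * (|q k| * r^(k-1)) := by
          apply mul_le_mul_of_nonneg_right hkey; positivity
      _ = (1+r)/2 * (|q k| * ((k:ℝ) * r^(k-1))) := by ring
  have hbound : ∀ k (y : ℝ), y ∈ Ioo (-r) r → ‖q k * ((k:ℝ) * y^(k-1))‖ ≤ u k := by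
    intro k y hy
    have hyr : |y| ≤ r := by
      rw [abs_le]; exact ⟨hy.1.le, hy.2.le⟩
    rw [Real.norm_eq_abs, abs_mul, abs_mul, abs_pow]
    rw [Nat.abs_cast]
    apply mul_le_mul_of_nonneg_left _ (abs_nonneg _)
    apply mul_le_mul_of_nonneg_left _ (Nat.cast_nonneg k)
    exact pow_le_pow_left₀ (abs_nonneg y) hyr _
  have hD := hasDerivAt_tsum_of_isPreconnected hu isOpen_Ioo
      (convex_Ioo (-r) r).isPreconnected
      (fun k y _ => (hasDerivAt_pow k y).const_mul (q k))
      (fun k y hy => hbound k y hy)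
      (show (0:ℝ) ∈ Ioo (-r) r by constructor <;> simp [hr0] <;> linarith)
      (by
        apply summable_of_ne_finset_zero (s := {0})
        intro k hk
        have : k ≠ 0 := by simpa using hk
        simp [zero_pow this])
      (show t ∈ Ioo (-r) r by rw [mem_Ioo, ← abs_lt]; exact htr)
  refine hD.congr_deriv ?_
  symm
  have hsum : Summable fun k => q k * ((k:ℝ) * t^(k-1)) := by
    apply Summable.of_norm_bounded hu
    intro k
    apply hbound k t
    rw [mem_Ioo, ← abs_lt]; exact htr
  rw [Summable.tsum_eq_zero_add hsum]
  simp only [Nat.cast_zero, zero_mul, mul_zero, zero_add, Nat.add_sub_cancel]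
  apply tsum_congr
  intro k
  push_cast
  ring

end PS

noncomputable def gg (n : ℝ) (k : ℕ) : ℝ := poch n k / (Nat.factorial k)
noncomputable def ee (n : ℝ) (k : ℕ) : ℝ := poch (1 - n/2) k / poch (1 + n/2) k
noncomputable def ep (n : ℝ) (k : ℕ) : ℝ := poch (2 - n/2) k / poch (1 + n/2) k
noncomputable def cc (n : ℝ) (k : ℕ) : ℝ :=
  poch n k * poch (n/2) k / (poch (1 + n/2) k * (Nat.factorial k))
noncomputable def dd (n : ℝ) (m : ℕ) : ℝ := ∑ j ∈ Finset.range (m+1), ee n j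

noncomputable def ρg (n : ℝ) (k : ℕ) : ℝ := ((k:ℝ)+n)/((k:ℝ)+1)
noncomputable def ρe (n : ℝ) (k : ℕ) : ℝ := ((k:ℝ)+(1-n/2))/((k:ℝ)+(1+n/2))
noncomputable def ρp (n : ℝ) (k : ℕ) : ℝ := ((k:ℝ)+(2-n/2))/((k:ℝ)+(1+n/2))
noncomputable def ρc (n : ℝ) (k : ℕ) : ℝ := ρg n k * (((k:ℝ)+n/2)/((k:ℝ)+(1+n/2)))

section Seq
variable {n : ℝ} (hn : 2 < n)
include hn

lemma hn2 : (0:ℝ) < n/2 := by linarith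
lemma h1n : (0:ℝ) < 1 + n/2 := by linarith
lemma poch1n_pos (k : ℕ) : 0 < poch (1 + n/2) k := poch_pos (h1n hn) k
lemma poch1n_ne (k : ℕ) : poch (1 + n/2) k ≠ 0 := (poch1n_pos hn k).ne'
omit hn in
lemma fact_ne (k : ℕ) : ((Nat.factorial k : ℝ)) ≠ 0 := by
  exact_mod_cast k.factorial_ne_zero
omit hn in
lemma den1_ne (k : ℕ) : ((k:ℝ) + 1) ≠ 0 := by positivity
lemma den2_ne (k : ℕ) : ((k:ℝ) + (1 + n/2)) ≠ 0 := by
  have := h1n hn; positivity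

omit hn in
lemma tendsto_ρg : Tendsto (ρg n) atTop (𝓝 1) := tendsto_ratio n 1
omit hn in
lemma tendsto_ρe : Tendsto (ρe n) atTop (𝓝 1) := tendsto_ratio _ _
omit hn in
lemma tendsto_ρp : Tendsto (ρp n) atTop (𝓝 1) := tendsto_ratio _ _
omit hn in
lemma tendsto_ρc : Tendsto (ρc n) atTop (𝓝 1) := by
  have := (tendsto_ρg (n := n)).mul (tendsto_ratio (n/2) (1+n/2))
  rw [mul_one] at this
  exact this

omit hn in
lemma grec (k : ℕ) : gg n (k+1) = ρg n k * gg n k := by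
  rw [gg, gg, ρg, poch_succ, Nat.factorial_succ]
  have := fact_ne k
  push_cast
  field_simp
  ring

lemma erec (k : ℕ) : ee n (k+1) = ρe n k * ee n k := by
  rw [ee, ee, ρe, poch_succ, poch_succ]
  have h1 := poch1n_ne hn k
  have h2 := den2_ne hn k
  field_simp
  ring

lemma eprec (k : ℕ) : ep n (k+1) = ρp n k * ep n k := by
  rw [ep, ep, ρp, poch_succ, poch_succ]
  have h1 := poch1n_ne hn k
  have h2 := den2_ne hn k
  field_simp
  ring

lemma crec (k : ℕ) : cc n (k+1) = ρc n k * cc n k := by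
  rw [cc, cc, ρc, ρg, poch_succ, poch_succ, poch_succ, Nat.factorial_succ]
  have h1 := poch1n_ne hn k
  have h2 := den2_ne hn k
  have h3 := fact_ne k
  push_cast
  field_simp
  ring

omit hn in
lemma pochratio (k : ℕ) : poch (n/2) k * (n/2 + k) = (n/2) * poch (1 + n/2) k := by
  induction k with
  | zero => simp [poch]
  | succ k ih =>
      rw [poch_succ, poch_succ]
      push_cast
      have : poch (n/2) k * (n/2 + ((k:ℝ)+1)) * (n/2 + k) =
          (poch (n/2) k * (n/2 + k)) * (n/2 + ((k:ℝ)+1)) := by ring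
      calc poch (n/2) k * (n/2 + (k:ℝ)) * (n/2 + ((k:ℝ) + 1)) =
            (poch (n/2) k * (n/2 + (k:ℝ))) * (n/2 + (k:ℝ) + 1) := by ring
        _ = (n/2) * poch (1 + n/2) k * (n/2 + (k:ℝ) + 1) := by rw [ih]
        _ = n/2 * (poch (1 + n/2) k * (1 + n/2 + (k:ℝ))) := by ring

lemma ckey (k : ℕ) : ((k:ℝ) + n/2) * cc n k = (n/2) * gg n k := by
  have h1 := poch1n_ne hn k
  have h3 := fact_ne k
  rw [cc, gg, mul_div_assoc', mul_div_assoc', div_eq_div_iff (mul_ne_zero h1 h3) h3]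
  linear_combination poch n k * (Nat.factorial k : ℝ) * pochratio (n := n) k

lemma ekey (k : ℕ) : ((k:ℝ)+1+n/2) * ee n (k+1) = ((k:ℝ)+1-n/2) * ee n k := by
  rw [erec hn, ρe]  -- ekey
  have h2 := den2_ne hn k
  field_simp
  ring

omit hn in
lemma gkey (k : ℕ) : ((k:ℝ)+1) * gg n (k+1) = (n + k) * gg n k := by
  rw [grec, ρg, show ((k:ℝ)+1) * (((k:ℝ)+n)/((k:ℝ)+1) * gg n k)
      = (((k:ℝ)+n) * gg n k) * (((k:ℝ)+1)/((k:ℝ)+1)) from by ring,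
    div_self (den1_ne k), mul_one]
  ring

lemma abs_ee_le (k : ℕ) : |ee n k| ≤ 1 := by
  rw [ee, abs_div, abs_of_pos (poch1n_pos hn k)]
  rw [div_le_one (poch1n_pos hn k)]
  apply abs_poch_le
  intro i
  rw [abs_le]
  constructor <;> [linarith; linarith]

lemma abs_ep_le (k : ℕ) : |ep n k| ≤ 1 := by
  rw [ep, abs_div, abs_of_pos (poch1n_pos hn k)]
  rw [div_le_one (poch1n_pos hn k)]
  apply abs_poch_le
  intro i
  rw [abs_le]
  constructor <;> [linarith; linarith]

lemma abs_dd_le (m : ℕ) : |dd n m| ≤ (m:ℝ) + 1 := by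
  rw [dd]
  calc |∑ j ∈ Finset.range (m+1), ee n j| ≤ ∑ j ∈ Finset.range (m+1), |ee n j| :=
        Finset.abs_sum_le_sum_abs _ _
    _ ≤ ∑ j ∈ Finset.range (m+1), 1 := Finset.sum_le_sum (fun j _ => abs_ee_le hn j)
    _ = (m:ℝ) + 1 := by simp

lemma dclosed (m : ℕ) :
    dd n m = (n-2)/(2*(n-1)) * ep n m + n/(2*(n-1)) := by
  have hne : n - 1 ≠ 0 := by linarith
  induction m with
  | zero =>
      rw [dd, ep]
      simp [poch_zero, ee]
      field_simp
      ring
  | succ m ih =>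
      rw [dd, Finset.sum_range_succ, ← dd, ih]
      have hstep : ee n (m+1) = (n-2)/(2*(n-1)) * (ep n (m+1) - ep n m) := by
        have h1 := poch1n_ne hn m
        have h4 : (1 + n/2 + (m:ℝ)) ≠ 0 := by positivity
        have h3 : (1:ℝ) - n/2 + 1 = 2 - n/2 := by ring
        rw [ee, ep, ep, poch_succ' (1 - n/2) m, poch_succ (1 + n/2) m,
          poch_succ (2 - n/2) m, h3,
          show (2-n/2+(m:ℝ)) = (1+n/2+(m:ℝ)) + (1-n) from by ring]
        set p := poch (2 - n/2) m with hp
        set q := poch (1 + n/2) m with hq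
        set z := 1 + n/2 + (m:ℝ) with hz
        field_simp
        ring
      rw [hstep]
      ring

end Seq

lemma tsum_zero_pow (q : ℕ → ℝ) : ∑' k : ℕ, q k * (0:ℝ)^k = q 0 := by
  rw [tsum_eq_single 0]
  · simp
  · intro b hb; simp [zero_pow hb]

section PS2
variable {q ρ : ℕ → ℝ}

lemma summable_deriv_ps (hrec : ∀ k, q (k+1) = ρ k * q k)
    (hρ : Tendsto ρ atTop (𝓝 1)) {t : ℝ} (ht : |t| < 1) :
    Summable fun k : ℕ => ((k:ℝ)+1) * q (k+1) * t ^ k := by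
  apply summable_ps (ρ := fun k => (((k:ℝ)+2)/((k:ℝ)+1)) * ρ (k+1)) _ _ ht
  · intro k
    rw [hrec (k+1)]
    have h1 : ((k:ℝ)+1) ≠ 0 := by positivity
    push_cast
    field_simp
    ring
  · have := (tendsto_ratio 2 1).mul (hρ.comp (tendsto_add_atTop_nat 1))
    simpa using this

lemma summable_shift (s : ℝ)
    (h : Summable fun k : ℕ => ((k:ℝ)+1) * q (k+1) * s ^ k) :
    Summable (fun k : ℕ => (k:ℝ) * q k * s ^ k) := by
  apply (summable_nat_add_iff 1).mp
  apply (h.mul_left s).congr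
  intro k; push_cast; ring

lemma shift_eq (s : ℝ)
    (h : Summable fun k : ℕ => ((k:ℝ)+1) * q (k+1) * s ^ k) :
    s * (∑' k : ℕ, ((k:ℝ)+1) * q (k+1) * s ^ k) = ∑' k : ℕ, (k:ℝ) * q k * s ^ k := by
  rw [Summable.tsum_eq_zero_add (summable_shift s h)]
  rw [← tsum_mul_left]
  simp only [Nat.cast_zero, zero_mul, zero_add]
  apply tsum_congr
  intro k; push_cast; ring

end PS2

noncomputable def Uf (n : ℝ) (t : ℝ) : ℝ := ∑' k : ℕ, ee n k * t ^ k
noncomputable def Bf (n : ℝ) (t : ℝ) : ℝ := ∑' k : ℕ, gg n k * t ^ k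
noncomputable def Ff (n : ℝ) (t : ℝ) : ℝ := ∑' k : ℕ, cc n k * t ^ k
noncomputable def Ud (n : ℝ) (t : ℝ) : ℝ := ∑' k : ℕ, ((k:ℝ)+1) * ee n (k+1) * t ^ k
noncomputable def Bd (n : ℝ) (t : ℝ) : ℝ := ∑' k : ℕ, ((k:ℝ)+1) * gg n (k+1) * t ^ k
noncomputable def Fd (n : ℝ) (t : ℝ) : ℝ := ∑' k : ℕ, ((k:ℝ)+1) * cc n (k+1) * t ^ k

section Fun
variable {n : ℝ} (hn : 2 < n)
include hn

lemma ee_zero : ee n 0 = 1 := by simp [ee, poch_zero]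
omit hn in
lemma gg_zero : gg n 0 = 1 := by simp [gg, poch_zero]
lemma cc_zero : cc n 0 = 1 := by simp [cc, poch_zero]

lemma hasDerivAt_Uf {t : ℝ} (ht : |t| < 1) : HasDerivAt (Uf n) (Ud n t) t :=
  hasDerivAt_ps (erec hn) tendsto_ρe ht

omit hn in
lemma hasDerivAt_Bf {t : ℝ} (ht : |t| < 1) : HasDerivAt (Bf n) (Bd n t) t :=
  hasDerivAt_ps grec tendsto_ρg ht

lemma hasDerivAt_Ff {t : ℝ} (ht : |t| < 1) : HasDerivAt (Ff n) (Fd n t) t :=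
  hasDerivAt_ps (crec hn) tendsto_ρc ht

lemma Uf_zero : Uf n 0 = 1 := by rw [Uf, tsum_zero_pow, ee_zero hn]
omit hn in
lemma Bf_zero : Bf n 0 = 1 := by rw [Bf, tsum_zero_pow, gg_zero]
lemma Ff_zero : Ff n 0 = 1 := by rw [Ff, tsum_zero_pow, cc_zero hn]

omit hn in
lemma sumid_B {s : ℝ} (hs : |s| < 1) : (1 - s) * Bd n s = n * Bf n s := by
  have hS : Summable fun k : ℕ => gg n k * s ^ k := summable_ps grec tendsto_ρg hs
  have hD : Summable fun k : ℕ => ((k:ℝ)+1) * gg n (k+1) * s ^ k :=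
    summable_deriv_ps grec tendsto_ρg hs
  have hT : Summable fun k : ℕ => (k:ℝ) * gg n k * s ^ k := summable_shift s hD
  have A1 : s * Bd n s = ∑' k : ℕ, (k:ℝ) * gg n k * s ^ k := shift_eq s hD
  have key : Bd n s = ∑' k : ℕ, (n * (gg n k * s ^ k) + (k:ℝ) * gg n k * s ^ k) := by
    rw [Bd]
    apply tsum_congr
    intro k
    linear_combination s^k * gkey (n := n) k
  rw [mul_comm (1-s) (Bd n s), mul_sub, mul_one, mul_comm (Bd n s) s, A1, key,
    Summable.tsum_add (hS.mul_left n) hT, tsum_mul_left, ← Bf]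
  ring

lemma sumid_F {s : ℝ} (hs : |s| < 1) :
    s * Fd n s + (n/2) * Ff n s = (n/2) * Bf n s := by
  have hS : Summable fun k : ℕ => cc n k * s ^ k := summable_ps (crec hn) tendsto_ρc hs
  have hD : Summable fun k : ℕ => ((k:ℝ)+1) * cc n (k+1) * s ^ k :=
    summable_deriv_ps (crec hn) tendsto_ρc hs
  have hT : Summable fun k : ℕ => (k:ℝ) * cc n k * s ^ k := summable_shift s hD
  have A1 : s * Fd n s = ∑' k : ℕ, (k:ℝ) * cc n k * s ^ k := shift_eq s hD
  rw [A1, Ff, ← tsum_mul_left, ← Summable.tsum_add hT (hS.mul_left (n/2))]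
  rw [Bf, ← tsum_mul_left]
  apply tsum_congr
  intro k
  linear_combination s^k * ckey hn k

lemma sumid_U {s : ℝ} (hs : |s| < 1) :
    s * (1 - s) * Ud n s = ((1-n/2)*s - n/2) * Uf n s + n/2 := by
  have hS : Summable fun k : ℕ => ee n k * s ^ k := summable_ps (erec hn) tendsto_ρe hs
  have hD : Summable fun k : ℕ => ((k:ℝ)+1) * ee n (k+1) * s ^ k :=
    summable_deriv_ps (erec hn) tendsto_ρe hs
  have hT : Summable fun k : ℕ => (k:ℝ) * ee n k * s ^ k := summable_shift s hD
  have h1 : Summable (fun k : ℕ => (((k:ℝ)+1) * ee n (k+1)) * s^(k+1)) := by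
    apply (hD.mul_left s).congr; intro k; ring
  have h2 : Summable (fun k : ℕ => ((k:ℝ) * ee n k) * s^(k+1)) := by
    apply (hT.mul_left s).congr; intro k; ring
  have hS4 : Summable (fun k : ℕ => ee n (k+1) * s^(k+1)) := by
    have := (summable_nat_add_iff (f := fun k : ℕ => ee n k * s ^ k) 1).mpr hS
    exact this
  have hS3 : Summable (fun k : ℕ => ee n k * s^(k+1)) := by
    apply (hS.mul_left s).congr; intro k; ring
  have A1 : s * Ud n s = ∑' k : ℕ, (k:ℝ) * ee n k * s ^ k := shift_eq s hD
  have A1' : (∑' k : ℕ, (k:ℝ) * ee n k * s ^ k)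
      = ∑' k : ℕ, (((k:ℝ)+1) * ee n (k+1)) * s^(k+1) := by
    rw [Summable.tsum_eq_zero_add hT]
    simp only [Nat.cast_zero, zero_mul, zero_add]
    apply tsum_congr; intro k; push_cast; ring
  have A2 : s * (∑' k : ℕ, (k:ℝ) * ee n k * s ^ k)
      = ∑' k : ℕ, ((k:ℝ) * ee n k) * s^(k+1) := by
    rw [← tsum_mul_left]; apply tsum_congr; intro k; ring
  have A3 : s * Uf n s = ∑' k : ℕ, ee n k * s^(k+1) := by
    rw [Uf, ← tsum_mul_left]; apply tsum_congr; intro k; ring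
  have A4 : Uf n s = 1 + ∑' k : ℕ, ee n (k+1) * s^(k+1) := by
    rw [Uf, Summable.tsum_eq_zero_add hS, ee_zero hn]
    simp
  have key : (∑' k : ℕ, (((k:ℝ)+1) * ee n (k+1)) * s^(k+1))
        - ∑' k : ℕ, ((k:ℝ) * ee n k) * s^(k+1)
      = (1-n/2) * (∑' k : ℕ, ee n k * s^(k+1))
        - (n/2) * ∑' k : ℕ, ee n (k+1) * s^(k+1) := by
    rw [← Summable.tsum_sub h1 h2, ← tsum_mul_left, ← tsum_mul_left,
      ← Summable.tsum_sub (hS3.mul_left (1-n/2)) (hS4.mul_left (n/2))]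
    apply tsum_congr
    intro k
    linear_combination s^(k+1) * ekey hn k
  have final : s * Ud n s - s * (s * Ud n s)
      = (1-n/2) * (s * Uf n s) - (n/2) * (Uf n s - 1) := by
    rw [A1, A2, A1', A3]
    have A4' : (∑' k : ℕ, ee n (k+1) * s^(k+1)) = Uf n s - 1 := by
      rw [A4]; ring
    rw [← A4']
    exact key
  linear_combination final
end Fun

section Euler
variable {n : ℝ} (hn : 2 < n)
include hn

omit hn in
lemma Bf_rpow {t : ℝ} (ht : t ∈ Ico (0:ℝ) 1) : Bf n t = (1-t)^(-n) := by
  obtain ⟨ht0, ht1⟩ := ht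
  have h1t : (0:ℝ) < 1 - t := by linarith
  have hder : ∀ s ∈ Icc (0:ℝ) t, HasDerivAt (fun y : ℝ => Bf n y * (1-y)^n) 0 s := by
    intro s hs
    have hs1 : s < 1 := lt_of_le_of_lt hs.2 ht1
    have habs : |s| < 1 := by rw [abs_lt]; constructor <;> [linarith [hs.1]; linarith]
    have h1s : (0:ℝ) < 1 - s := by linarith
    have hB := hasDerivAt_Bf (n := n) habs
    have hb : HasDerivAt (fun y : ℝ => 1 - y) (-1) s := (hasDerivAt_id s).const_sub 1
    have hr : HasDerivAt (fun y : ℝ => (1-y)^n) ((-1) * n * (1-s)^(n-1)) s :=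
      hb.rpow_const (Or.inl h1s.ne')
    have hall := hB.mul hr
    refine hall.congr_deriv ?_
    symm
    have hsplit : (1-s)^(n-1) * (1-s) = (1-s)^n := by
      rw [← Real.rpow_add_one h1s.ne' (n-1)]; congr 1; ring
    rw [← hsplit]
    linear_combination (-(1-s)^(n-1)) * sumid_B (n := n) habs
  have hconst := constant_of_has_deriv_right_zero
    (f := fun y : ℝ => Bf n y * (1-y)^n)
    (fun s hs => (hder s hs).continuousAt.continuousWithinAt)
    (fun s hs => (hder s (Ico_subset_Icc_self hs)).hasDerivWithinAt)
  have hKt := hconst t ⟨ht0, le_refl t⟩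
  simp only [sub_zero, Real.one_rpow, mul_one, Bf_zero] at hKt
  have hpow : (0:ℝ) < (1-t)^n := Real.rpow_pos_of_pos h1t n
  rw [Real.rpow_neg h1t.le]
  field_simp
  linear_combination hKt

lemma euler {t : ℝ} (ht : t ∈ Ico (0:ℝ) 1) :
    (1-t)^(n-1) * Ff n t = Uf n t := by
  obtain ⟨ht0, ht1⟩ := ht
  rcases eq_or_lt_of_le ht0 with h0 | h0
  · rw [← h0]
    simp only [sub_zero, Real.one_rpow, one_mul]
    rw [Ff_zero hn, Uf_zero hn]
  · set φ : ℝ → ℝ := fun y => ((1-y)^(n-1) * Ff n y - Uf n y) * (y^(n/2) * (1-y)^(1-n))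
      with hφdef
    have hφder : ∀ s : ℝ, 0 < s → s < 1 → HasDerivAt φ 0 s := by
      intro s hs0 hs1
      have habs : |s| < 1 := by rw [abs_lt]; constructor <;> linarith
      have h1s : (0:ℝ) < 1 - s := by linarith
      have hF := hasDerivAt_Ff hn habs
      have hU := hasDerivAt_Uf hn habs
      have hb : HasDerivAt (fun y : ℝ => 1 - y) (-1) s := (hasDerivAt_id s).const_sub 1
      have hP : HasDerivAt (fun y : ℝ => (1-y)^(n-1)) ((-1) * (n-1) * (1-s)^(n-1-1)) s :=
        hb.rpow_const (Or.inl h1s.ne')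
      have hψd : HasDerivAt (fun y : ℝ => (1-y)^(n-1) * Ff n y - Uf n y)
          ((-1) * (n-1) * (1-s)^(n-1-1) * Ff n s + (1-s)^(n-1) * Fd n s - Ud n s) s :=
        (hP.mul hF).sub hU
      have hM : HasDerivAt (fun y : ℝ => y^(n/2)) (n/2 * s^(n/2-1)) s :=
        Real.hasDerivAt_rpow_const (Or.inl hs0.ne')
      have hR : HasDerivAt (fun y : ℝ => (1-y)^(1-n)) ((-1) * (1-n) * (1-s)^(1-n-1)) s :=
        hb.rpow_const (Or.inl h1s.ne')
      have hμ : HasDerivAt (fun y : ℝ => y^(n/2) * (1-y)^(1-n))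
          (n/2 * s^(n/2-1) * (1-s)^(1-n) + s^(n/2) * ((-1) * (1-n) * (1-s)^(1-n-1))) s :=
        hM.mul hR
      have hall := hψd.mul hμ
      refine hall.congr_deriv ?_
      symm
      have r1 : (1-s)^(n-1-1) * (1-s) = (1-s)^(n-1) := by
        rw [← Real.rpow_add_one h1s.ne' (n-1-1)]; congr 1; ring
      have r2 : s^(n/2-1) * s = s^(n/2) := by
        rw [← Real.rpow_add_one hs0.ne' (n/2-1)]; congr 1; ring
      have r4 : (1-s)^(1-n-1) * (1-s) = (1-s)^(1-n) := by
        rw [← Real.rpow_add_one h1s.ne' (1-n-1)]; congr 1; ring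
      have r3' : (1-s)^(n-1-1) * (1-s) * ((1-s)^(1-n-1) * (1-s)) = 1 := by
        rw [r1, r4, ← Real.rpow_add h1s]
        rw [show (n-1) + (1-n) = 0 from by ring, Real.rpow_zero]
      have hsF := sumid_F hn habs
      have RBq : Bf n s = (1-s)^(1-n-1) := by
        rw [Bf_rpow ⟨hs0.le, hs1⟩]; congr 1; ring
      rw [RBq] at hsF
      have hsU := sumid_U hn habs
      rw [← r1, ← r2, ← r4]
      linear_combination (-((1-s)^(n-1-1) * s^(n/2-1) * (1-s)^(1-n-1) * (1-s)^2)) * hsF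
        + (s^(n/2-1) * (1-s)^(1-n-1)) * hsU
        + (-(n/2 * s^(n/2-1) * (1-s)^(1-n-1))) * r3'
    have hclaim : ∀ s ∈ Ioc (0:ℝ) t, φ t = φ s := by
      intro s₀ hs₀
      have hconst := constant_of_has_deriv_right_zero (f := φ) (a := s₀) (b := t)
        (fun s hs => ((hφder s (lt_of_lt_of_le hs₀.1 hs.1)
          (lt_of_le_of_lt hs.2 ht1)).continuousAt).continuousWithinAt)
        (fun s hs => (hφder s (lt_of_lt_of_le hs₀.1 hs.1)
          (hs.2.trans ht1)).hasDerivWithinAt)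
      exact hconst t ⟨hs₀.2, le_refl t⟩
    have hlim0 : Tendsto φ (𝓝[Ioc 0 t] 0) (𝓝 0) := by
      have hF0 : ContinuousAt (Ff n) 0 := (hasDerivAt_Ff hn (by norm_num)).continuousAt
      have hU0 : ContinuousAt (Uf n) 0 := (hasDerivAt_Uf hn (by norm_num)).continuousAt
      have h1 : ContinuousAt (fun y : ℝ => (1-y)^(n-1)) 0 :=
        ContinuousAt.rpow_const (continuousAt_const.sub continuousAt_id) (Or.inl (by norm_num))
      have h2 : ContinuousAt (fun y : ℝ => y^(n/2)) 0 :=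
        Real.continuousAt_rpow_const 0 (n/2) (Or.inr (by linarith))
      have h3 : ContinuousAt (fun y : ℝ => (1-y)^(1-n)) 0 :=
        ContinuousAt.rpow_const (continuousAt_const.sub continuousAt_id) (Or.inl (by norm_num))
      have hcont : ContinuousAt φ 0 := ((h1.mul hF0).sub hU0).mul (h2.mul h3)
      have hφ0 : φ 0 = 0 := by
        have hz : (0:ℝ)^(n/2) = 0 := Real.zero_rpow (by intro h; linarith)
        simp [hφdef, hz]
      have h4 := hcont.tendsto
      rw [hφ0] at h4
      exact h4.mono_left nhdsWithin_le_nhds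
    have hne : (𝓝[Ioc (0:ℝ) t] 0).NeBot := left_nhdsWithin_Ioc_neBot h0
    have hlimt : Tendsto φ (𝓝[Ioc 0 t] 0) (𝓝 (φ t)) := by
      apply Tendsto.congr' _ tendsto_const_nhds
      filter_upwards [self_mem_nhdsWithin] with s hs
      exact hclaim s hs
    have hφt : φ t = 0 := tendsto_nhds_unique hlimt hlim0
    have hp1 : (0:ℝ) < t^(n/2) := Real.rpow_pos_of_pos h0 (n/2)
    have hp2 : (0:ℝ) < (1-t)^(1-n) := Real.rpow_pos_of_pos (by linarith) (1-n)
    have hz : (1-t)^(n-1) * Ff n t - Uf n t = 0 := by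
      rcases mul_eq_zero.mp hφt with h | h
      · exact h
      · nlinarith
    linarith
end Euler

noncomputable def Df (n : ℝ) (t : ℝ) : ℝ := ∑' m : ℕ, dd n m * t ^ m

section Final
variable {n : ℝ} (hn : 2 < n)
include hn

lemma summable_abs_dd {t : ℝ} (ht : |t| < 1) :
    Summable fun m : ℕ => |dd n m * t ^ m| := by
  have hg : Summable fun m : ℕ => ((m:ℝ)+1) * |t|^m := by
    have h1 : Summable fun m : ℕ => (m:ℝ) * |t|^m := by
      have := summable_pow_mul_geometric_of_norm_lt_one 1 (r := |t|)
        (by rwa [Real.norm_eq_abs, abs_abs])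
      apply this.congr; intro m; rw [pow_one]
    have h2 : Summable fun m : ℕ => |t|^m :=
      summable_geometric_of_lt_one (abs_nonneg t) ht
    apply (h1.add h2).congr; intro m; ring
  apply Summable.of_nonneg_of_le (fun m => abs_nonneg _) _ hg
  intro m
  rw [abs_mul, abs_pow]
  apply mul_le_mul_of_nonneg_right _ (pow_nonneg (abs_nonneg t) m)
  have := abs_dd_le hn (n := n) m
  linarith

lemma dd_succ (m : ℕ) : dd n (m+1) = dd n m + ee n (m+1) := by
  rw [dd, dd, Finset.sum_range_succ]

lemma DU {t : ℝ} (ht : |t| < 1) : (1 - t) * Df n t = Uf n t := by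
  have hD : Summable (fun m : ℕ => dd n m * t^m) := (summable_abs_dd hn ht).of_abs
  have hDs : Summable (fun m : ℕ => dd n (m+1) * t^(m+1)) :=
    (summable_nat_add_iff 1).mpr hD
  have hDt : Summable (fun m : ℕ => dd n m * t^(m+1)) := by
    apply (hD.mul_right t).congr; intro m; ring
  have hS : Summable fun k : ℕ => ee n k * t ^ k := summable_ps (erec hn) tendsto_ρe ht
  have A1 : Df n t = dd n 0 + ∑' m : ℕ, dd n (m+1) * t^(m+1) := by
    rw [Df, Summable.tsum_eq_zero_add hD]; simp
  have A2 : t * Df n t = ∑' m : ℕ, dd n m * t^(m+1) := by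
    rw [Df, ← tsum_mul_left]; apply tsum_congr; intro m; ring
  have A3 : Uf n t = 1 + ∑' m : ℕ, ee n (m+1) * t^(m+1) := by
    rw [Uf, Summable.tsum_eq_zero_add hS, ee_zero hn]; simp
  have key : (∑' m : ℕ, dd n (m+1) * t^(m+1)) - (∑' m : ℕ, dd n m * t^(m+1))
      = ∑' m : ℕ, ee n (m+1) * t^(m+1) := by
    rw [← Summable.tsum_sub hDs hDt]
    apply tsum_congr; intro m
    rw [dd_succ hn]; ring
  have hd0 : dd n 0 = 1 := by rw [dd]; simp [ee_zero hn]
  have expand : (1-t) * Df n t = Df n t - t * Df n t := by ring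
  rw [expand, A2, A3]
  nth_rewrite 1 [A1]
  rw [hd0]
  linarith [key]

lemma integrand_eq {t : ℝ} (ht : t ∈ Ico (0:ℝ) 1) :
    (1-t)^(n-2) * hyp2F1 n (n/2) (1+n/2) t = Df n t := by
  have h1t : (0:ℝ) < 1 - t := by have := ht.2; linarith
  have habs : |t| < 1 := by rw [abs_lt]; constructor <;> [linarith [ht.1]; exact ht.2]
  have hF : hyp2F1 n (n/2) (1+n/2) t = Ff n t := rfl
  have hsplit : (1-t)^(n-2) * (1-t) = (1-t)^(n-1) := by
    rw [← Real.rpow_add_one h1t.ne' (n-2)]; congr 1; ring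
  have key := euler hn ht
  have hDU := DU hn habs
  have : (1-t)^(n-2) * hyp2F1 n (n/2) (1+n/2) t * (1-t) = Df n t * (1-t) := by
    rw [hF]
    calc (1-t)^(n-2) * Ff n t * (1-t) = ((1-t)^(n-2) * (1-t)) * Ff n t := by ring
      _ = (1-t)^(n-1) * Ff n t := by rw [hsplit]
      _ = Uf n t := key
      _ = Df n t * (1-t) := by rw [← hDU]; ring
  exact mul_right_cancel₀ h1t.ne' this

end Final

/-- for `n > 2` and `x ∈ [0,1)`,
`∫₀ˣ (1-t)^{n-2} ₂F₁(n, n/2; 1+n/2; t) dt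
  = ((n-2)/(2(n-1))) x ₃F₂(2-n/2,1,1;2,1+n/2;x) + (n/(2(n-1))) log(1/(1-x))`. -/
theorem integral_fn (n : ℝ) (hn : 2 < n) (x : ℝ) (hx : x ∈ Set.Ico (0:ℝ) 1) :
    ∫ t in (0:ℝ)..x, (1 - t) ^ (n - 2) * hyp2F1 n (n / 2) (1 + n / 2) t
      = (n - 2) / (2 * (n - 1)) * x * hyp3F2 (2 - n / 2) 1 1 2 (1 + n / 2) x
        + n / (2 * (n - 1)) * Real.log (1 / (1 - x)) := by
  obtain ⟨hx0, hx1⟩ := hx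
  have hxa : |x| < 1 := by rw [abs_lt]; constructor <;> linarith
  have heq : Set.EqOn (fun t => (1 - t) ^ (n - 2) * hyp2F1 n (n / 2) (1 + n / 2) t) (Df n)
      (Set.uIcc 0 x) := by
    intro t htm
    rw [Set.uIcc_of_le hx0] at htm
    exact integrand_eq hn ⟨htm.1, lt_of_le_of_lt htm.2 hx1⟩
  rw [intervalIntegral.integral_congr heq]
  have hbound_sum : Summable (fun m : ℕ => |dd n m| * x ^ m) := by
    apply (summable_abs_dd hn hxa).congr
    intro m; rw [abs_mul, abs_pow, abs_of_nonneg hx0]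
  have hswap : HasSum (fun m : ℕ => ∫ t in (0:ℝ)..x, dd n m * t ^ m)
      (∫ t in (0:ℝ)..x, Df n t) := by
    apply intervalIntegral.hasSum_integral_of_dominated_convergence
      (bound := fun m t => |dd n m| * x ^ m)
    · intro m
      exact (Continuous.aestronglyMeasurable (by continuity))
    · intro m
      filter_upwards with t htm
      have h1 : t ∈ Set.Ioc 0 x := by rwa [Set.uIoc_of_le hx0] at htm
      have h2 : |t| ≤ x := by rw [abs_of_pos h1.1]; exact h1.2
      rw [Real.norm_eq_abs, abs_mul, abs_pow]
      exact mul_le_mul_of_nonneg_left (pow_le_pow_left₀ (abs_nonneg t) h2 m) (abs_nonneg _)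
    · filter_upwards with t htm
      exact hbound_sum
    · exact intervalIntegrable_const
    · filter_upwards with t htm
      have h1 : t ∈ Set.Ioc 0 x := by rwa [Set.uIoc_of_le hx0] at htm
      have hta : |t| < 1 := by
        rw [abs_lt]; constructor <;> [linarith [h1.1]; linarith [h1.2]]
      exact ((summable_abs_dd hn hta).of_abs).hasSum
  have hint : ∀ m : ℕ, ∫ t in (0:ℝ)..x, dd n m * t ^ m = dd n m * (x^(m+1)/((m:ℝ)+1)) := by
    intro m
    rw [intervalIntegral.integral_const_mul, integral_pow]
    norm_num
  simp_rw [hint] at hswap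
  rw [← hswap.tsum_eq]
  have hlog : HasSum (fun m : ℕ => x^(m+1)/((m:ℝ)+1)) (Real.log (1/(1-x))) := by
    have h := Real.hasSum_pow_div_log_of_abs_lt_one hxa
    rw [one_div, Real.log_inv]
    exact h
  have hgeo : Summable (fun m : ℕ => x^(m+1)) := by
    apply ((summable_geometric_of_lt_one hx0 hx1).mul_left x).congr
    intro m; rw [pow_succ]; ring
  have hep : Summable (fun m : ℕ => ep n m * (x^(m+1)/((m:ℝ)+1))) := by
    apply Summable.of_norm_bounded hgeo
    intro m
    rw [Real.norm_eq_abs, abs_mul, abs_div]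
    have h1 : |x^(m+1)| = x^(m+1) := by rw [abs_pow, abs_of_nonneg hx0]
    have h2 : |((m:ℝ)+1)| = (m:ℝ)+1 := abs_of_pos (by positivity)
    rw [h1, h2]
    have h3 : x^(m+1)/((m:ℝ)+1) ≤ x^(m+1) := by
      apply div_le_self (by positivity) (by simp)
    have h4 := abs_ep_le hn (n := n) m
    have h5 : (0:ℝ) ≤ x^(m+1)/((m:ℝ)+1) := by positivity
    nlinarith
  have h3F2 : x * hyp3F2 (2 - n/2) 1 1 2 (1 + n/2) x
      = ∑' m : ℕ, ep n m * (x^(m+1)/((m:ℝ)+1)) := by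
    rw [hyp3F2, ← tsum_mul_left]
    apply tsum_congr
    intro m
    have h1 := poch1n_ne hn (n := n) m
    have h2 : ((Nat.factorial m : ℕ) : ℝ) ≠ 0 := fact_ne m
    have h3 : ((m:ℝ)+1) ≠ 0 := by positivity
    have hcoef : poch (2-n/2) m * poch 1 m * poch 1 m /
        (poch 2 m * poch (1+n/2) m * (Nat.factorial m : ℝ))
        = poch (2-n/2) m / (poch (1+n/2) m * ((m:ℝ)+1)) := by
      rw [poch_one, poch_two]
      rw [div_eq_div_iff (by exact mul_ne_zero (mul_ne_zero (mul_ne_zero h3 h2) h1) h2)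
        (mul_ne_zero h1 h3)]
      ring
    rw [hcoef, ep]
    field_simp
    ring
  calc (∑' m : ℕ, dd n m * (x^(m+1)/((m:ℝ)+1)))
      = ∑' m : ℕ, ((n-2)/(2*(n-1)) * (ep n m * (x^(m+1)/((m:ℝ)+1)))
          + n/(2*(n-1)) * (x^(m+1)/((m:ℝ)+1))) := by
        apply tsum_congr; intro m; rw [dclosed hn]; ring
    _ = (n-2)/(2*(n-1)) * (∑' m : ℕ, ep n m * (x^(m+1)/((m:ℝ)+1)))
          + n/(2*(n-1)) * Real.log (1/(1-x)) := by
        rw [Summable.tsum_add (hep.mul_left _) (hlog.summable.mul_left _), tsum_mul_left,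
          tsum_mul_left, hlog.tsum_eq]
    _ = (n - 2) / (2 * (n - 1)) * x * hyp3F2 (2 - n / 2) 1 1 2 (1 + n / 2) x
        + n / (2 * (n - 1)) * Real.log (1 / (1 - x)) := by
        rw [← h3F2]; ring
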